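/- Let F be a graph on r vertices and let H be an n-vertex F-factor, i.e. a vertex-disjoint union of n/r copies of F (with r dividing n). Then H is (r, r³/n)-uniform: V(H) can be partitioned into r independent sets U₁,…,U_r with sizes n_i and average degrees d_i satisfying Σ_{i=1}^r (n_i/n)(d_i − d)² ≤ (r³/n)², where d is the average degree of H. -/

import Mathlib

/-- The `F`-factor on `m · r` vertices: the disjoint union of `m` copies of the `r`-vertex
graph `F`, realised as the box product with the empty graph on `Fin m`. -/
def Ffactor (m r : ℕ) (F : SimpleGraph (Fin r)) : SimpleGraph (Fin m × Fin r) :=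
  SimpleGraph.boxProd (⊥ : SimpleGraph (Fin m)) F

open Fin.NatCast

lemma block_sum (r : ℕ) [NeZero r] (g : Fin r → ℕ) (p : Fin r) (k : ℕ) :
    ∑ i ∈ Finset.range (k * r), g (p + (i : Fin r)) = k * ∑ j, g j := by
  induction k with
  | zero => simp
  | succ k ih =>
    rw [Nat.succ_mul, ← Finset.sum_range_add_sum_Ico _ (Nat.le_add_right _ _), ih,
      Finset.sum_Ico_eq_sum_range, Nat.add_sub_cancel_left]
    have h1 : ∀ i ∈ Finset.range r, g (p + ((k * r + i : ℕ) : Fin r))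
        = g (p + (i : Fin r)) := by
      intro i _; congr 2; push_cast; simp
    rw [Finset.sum_congr rfl h1,
      ← Fin.sum_univ_eq_sum_range (fun i => g (p + (i : Fin r)))]
    have h2 : ∀ j : Fin r, g (p + ((j : ℕ) : Fin r)) = g (p + j) := by
      intro j; congr 2; exact Fin.cast_val_eq_self j
    rw [Fintype.sum_congr _ _ h2,
      Fintype.sum_equiv (Equiv.addLeft p) (fun a => g (p + a)) g (fun _ => rfl)]
    ring

theorem stmt_16 (r m : ℕ) (hr : 1 ≤ r) (hm : 1 ≤ m) (F : SimpleGraph (Fin r)) :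
    ∃ U : Fin m × Fin r → Fin r,
      (∀ u v, (Ffactor m r F).Adj u v → U u ≠ U v) ∧
      ∑ p : Fin r,
          (((Finset.univ.filter fun v => U v = p).card : ℝ) / ((r * m : ℕ) : ℝ)) *
            ((∑ v ∈ Finset.univ.filter fun v => U v = p,
                  (((Ffactor m r F).neighborSet v).ncard : ℝ)) /
                ((Finset.univ.filter fun v => U v = p).card : ℝ) -
              (∑ v : Fin m × Fin r, (((Ffactor m r F).neighborSet v).ncard : ℝ)) /
                ((r * m : ℕ) : ℝ)) ^ 2
        ≤ ((r : ℝ) ^ 3 / ((r * m : ℕ) : ℝ)) ^ 2 := by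
  classical
  haveI : NeZero r := ⟨by omega⟩
  set c : Fin m → Fin r := fun i => ((i : ℕ) : Fin r) with hc
  refine ⟨fun v => v.2 - c v.1, ?_, ?_⟩
  · rintro u v huv hUe
    rcases (SimpleGraph.boxProd_adj.mp huv) with ⟨h, _⟩ | ⟨h2, h1⟩
    · exact h.elim
    · apply h2.ne
      have hcc : c u.1 = c v.1 := by rw [h1]
      have : u.2 - c u.1 + c u.1 = v.2 - c v.1 + c v.1 := by
        simp only at hUe; rw [hUe, hcc]
      simpa using this
  · have hr0 : (0:ℝ) < (r:ℝ) := by exact_mod_cast (by omega : 0 < r)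
    have hm0 : (0:ℝ) < (m:ℝ) := by exact_mod_cast (by omega : 0 < m)
    -- degrees
    have hdeg : ∀ v : Fin m × Fin r,
        ((Ffactor m r F).neighborSet v).ncard = F.degree v.2 := by
      intro v
      have hset : (Ffactor m r F).neighborSet v
          = (fun j => (v.1, j)) '' F.neighborSet v.2 := by
        ext ⟨i, j⟩
        simp only [SimpleGraph.mem_neighborSet, Set.mem_image]
        constructor
        · intro h
          rcases SimpleGraph.boxProd_adj.mp h with ⟨h1, _⟩ | ⟨h1, h2⟩
          · exact h1.elim
          · exact ⟨j, h1, by rw [h2]⟩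
        · rintro ⟨b, hb, heq⟩
          cases heq
          exact SimpleGraph.boxProd_adj.mpr (Or.inr ⟨hb, rfl⟩)
      rw [hset, Set.ncard_image_of_injective _
        (fun a b h => ((Prod.mk.injEq _ _ _ _).mp h).2),
        ← Nat.card_coe_set_eq, Nat.card_eq_fintype_card,
        SimpleGraph.card_neighborSet_eq_degree]
    -- the classes
    have hfilt : ∀ p : Fin r,
        (Finset.univ.filter fun v : Fin m × Fin r => v.2 - c v.1 = p)
          = Finset.univ.image (fun i : Fin m => (i, p + c i)) := by
      intro p
      ext ⟨i, j⟩
      simp only [Finset.mem_filter, Finset.mem_univ, true_and, Finset.mem_image,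
        Prod.mk.injEq]
      constructor
      · intro h
        exact ⟨i, rfl, (sub_eq_iff_eq_add.mp h).symm⟩
      · rintro ⟨a, ha, hb⟩
        subst ha; subst hb
        exact add_sub_cancel_right p (c a)
    have hinj : ∀ p : Fin r, Function.Injective (fun i : Fin m => (i, p + c i)) := by
      intro p a b h
      exact congrArg Prod.fst h
    have hcard : ∀ p : Fin r,
        (Finset.univ.filter fun v : Fin m × Fin r => v.2 - c v.1 = p).card = m := by
      intro p
      rw [hfilt, Finset.card_image_of_injective _ (hinj p), Finset.card_univ,
        Fintype.card_fin]
    -- degree sums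
    set Dn : ℕ := ∑ j, F.degree j with hDn_def
    have hsum : ∀ p : Fin r,
        (∑ v ∈ Finset.univ.filter fun v : Fin m × Fin r => v.2 - c v.1 = p,
            (((Ffactor m r F).neighborSet v).ncard : ℝ))
          = ((∑ i : Fin m, F.degree (p + c i) : ℕ) : ℝ) := by
      intro p
      rw [hfilt, Finset.sum_image (fun a _ b _ h => hinj p h)]
      push_cast
      exact Finset.sum_congr rfl fun i _ => by rw [hdeg]
    have htot : (∑ v : Fin m × Fin r, (((Ffactor m r F).neighborSet v).ncard : ℝ))
        = (m : ℝ) * (Dn : ℝ) := by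
      rw [Fintype.sum_prod_type]
      have : ∀ i : Fin m, (∑ j : Fin r,
          (((Ffactor m r F).neighborSet (i, j)).ncard : ℝ)) = (Dn : ℝ) := by
        intro i
        rw [hDn_def]
        push_cast
        exact Finset.sum_congr rfl fun j _ => by rw [hdeg]
      rw [Finset.sum_congr rfl fun i _ => this i, Finset.sum_const, Finset.card_univ,
        Fintype.card_fin, nsmul_eq_mul]
    -- nat bounds on class degree sums
    have hql : m / r * r ≤ m := Nat.div_mul_le_self m r
    have hqu : m ≤ (m / r + 1) * r := by
      have h2 : m % r < r := Nat.mod_lt _ (by omega)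
      calc m = r * (m / r) + m % r := (Nat.div_add_mod m r).symm
        _ ≤ r * (m / r) + r := by omega
        _ = (m / r + 1) * r := by ring
    have hDle : Dn ≤ r * r := by
      rw [hDn_def]
      have hdle : ∀ j : Fin r, F.degree j ≤ r :=
        fun j => (F.degree_lt_card_verts j).le.trans (by simp)
      calc ∑ j : Fin r, F.degree j ≤ ∑ _j : Fin r, r :=
            Finset.sum_le_sum (fun j _ => hdle j)
        _ = r * r := by simp [Finset.sum_const, mul_comm]
    have hS : ∀ p : Fin r, m / r * Dn ≤ (∑ i : Fin m, F.degree (p + c i))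
        ∧ (∑ i : Fin m, F.degree (p + c i)) ≤ (m / r + 1) * Dn := by
      intro p
      have hrange : (∑ i : Fin m, F.degree (p + c i))
          = ∑ i ∈ Finset.range m, F.degree (p + ((i : ℕ) : Fin r)) := by
        exact Fin.sum_univ_eq_sum_range (fun i => F.degree (p + ((i :ℕ) : Fin r))) m
      constructor
      · rw [hrange, ← block_sum r (fun j => F.degree j) p (m / r)]
        exact Finset.sum_le_sum_of_subset (Finset.range_subset_range.mpr hql)
      · rw [hrange, ← block_sum r (fun j => F.degree j) p (m / r + 1)]
        exact Finset.sum_le_sum_of_subset (Finset.range_subset_range.mpr hqu)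
    -- per-term bound
    have hterm : ∀ p : Fin r,
        (((Finset.univ.filter fun v : Fin m × Fin r => v.2 - c v.1 = p).card : ℝ)
            / ((r * m : ℕ) : ℝ)) *
          ((∑ v ∈ Finset.univ.filter fun v : Fin m × Fin r => v.2 - c v.1 = p,
              (((Ffactor m r F).neighborSet v).ncard : ℝ)) /
              ((Finset.univ.filter fun v : Fin m × Fin r => v.2 - c v.1 = p).card : ℝ) -
            (∑ v : Fin m × Fin r, (((Ffactor m r F).neighborSet v).ncard : ℝ)) /
              ((r * m : ℕ) : ℝ)) ^ 2
        ≤ ((m : ℝ) / ((r : ℝ) * m)) * ((r : ℝ) ^ 3 / ((r : ℝ) * m)) ^ 2 := by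
      intro p
      rw [hcard p, hsum p, htot]
      set S : ℕ := ∑ i : Fin m, F.degree (p + c i) with hS_def
      obtain ⟨h1, h2⟩ := hS p
      have h1' : ((m / r : ℕ) : ℝ) * Dn ≤ (S : ℝ) := by exact_mod_cast h1
      have h2' : (S : ℝ) ≤ (((m / r : ℕ) : ℝ) + 1) * Dn := by exact_mod_cast h2
      have hql' : ((m / r : ℕ) : ℝ) * r ≤ (m : ℝ) := by exact_mod_cast hql
      have hqu' : (m : ℝ) ≤ (((m / r : ℕ) : ℝ) + 1) * r := by exact_mod_cast hqu
      have hDle' : (Dn : ℝ) ≤ (r : ℝ) * r := by exact_mod_cast hDle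
      have hD0 : (0:ℝ) ≤ (Dn : ℝ) := Nat.cast_nonneg _
      have hq0 : (0:ℝ) ≤ ((m / r : ℕ) : ℝ) := Nat.cast_nonneg _
      have hrm : ((r * m : ℕ) : ℝ) = (r : ℝ) * m := by push_cast; ring
      rw [hrm]
      have heq : (S : ℝ) / m - (m : ℝ) * Dn / ((r : ℝ) * m)
          = ((r : ℝ) * S - (m : ℝ) * Dn) / ((r : ℝ) * m) := by
        field_simp
      have hA : (r : ℝ) * S - (m : ℝ) * Dn ≤ (r : ℝ) ^ 3 := by nlinarith
      have hB : -((r : ℝ) ^ 3) ≤ (r : ℝ) * S - (m : ℝ) * Dn := by nlinarith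
      have hsq : ((S : ℝ) / m - (m : ℝ) * Dn / ((r : ℝ) * m)) ^ 2
          ≤ ((r : ℝ) ^ 3 / ((r : ℝ) * m)) ^ 2 := by
        rw [heq, div_pow, div_pow]
        apply div_le_div_of_nonneg_right ?_ (by positivity)
        exact sq_le_sq' hB hA
      have hpos : (0:ℝ) ≤ (m : ℝ) / ((r : ℝ) * m) := by positivity
      exact mul_le_mul_of_nonneg_left hsq hpos
    calc (∑ p : Fin r,
          (((Finset.univ.filter fun v : Fin m × Fin r => v.2 - c v.1 = p).card : ℝ)
              / ((r * m : ℕ) : ℝ)) *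
            ((∑ v ∈ Finset.univ.filter fun v : Fin m × Fin r => v.2 - c v.1 = p,
                (((Ffactor m r F).neighborSet v).ncard : ℝ)) /
                ((Finset.univ.filter fun v : Fin m × Fin r => v.2 - c v.1 = p).card : ℝ) -
              (∑ v : Fin m × Fin r, (((Ffactor m r F).neighborSet v).ncard : ℝ)) /
                ((r * m : ℕ) : ℝ)) ^ 2)
        ≤ ∑ _p : Fin r, ((m : ℝ) / ((r : ℝ) * m)) * ((r : ℝ) ^ 3 / ((r : ℝ) * m)) ^ 2 :=
          Finset.sum_le_sum (fun p _ => hterm p)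
      _ = ((r : ℝ) ^ 3 / ((r * m : ℕ) : ℝ)) ^ 2 := by
          rw [Finset.sum_const, Finset.card_univ, Fintype.card_fin, nsmul_eq_mul]
          have hrm : ((r * m : ℕ) : ℝ) = (r : ℝ) * m := by push_cast; ring
          rw [hrm]
          field_simp
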